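/- If λ ∈ ℝ satisfies λ > ρ(T), then the operator λ·id − T is invertible, its inverse (λ·id − T)⁻¹ is a positive operator on Lᵖ, and a measurable set A is (λ·id − T)⁻¹-invariant if and only if A is T-invariant. -/

import Mathlib

set_option maxHeartbeats 1000000
set_option synthInstance.maxHeartbeats 200000


open MeasureTheory ENNReal Filter Set Topology

noncomputable section

namespace PaperAtoms

variable {Ω : Type*} [MeasurableSpace Ω] {μ : MeasureTheory.Measure Ω} {p : ℝ≥0∞} [Fact (1 ≤ p)]

/-- `T` is a positive operator on `Lp`. -/
def IsPositiveOp (T : Lp ℝ p μ →L[ℝ] Lp ℝ p μ) : Prop :=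
  ∀ f : Lp ℝ p μ, 0 ≤ f → 0 ≤ T f

/-- A measurable set `A` is `T`-invariant if `T f` vanishes a.e. on `Aᶜ` for every
nonnegative `f ∈ Lp` vanishing a.e. on `Aᶜ`. -/
def Invariant (T : Lp ℝ p μ →L[ℝ] Lp ℝ p μ) (A : Set Ω) : Prop :=
  MeasurableSet A ∧
    ∀ f : Lp ℝ p μ, 0 ≤ f → (∀ᵐ x ∂μ, x ∉ A → f x = 0) → ∀ᵐ x ∂μ, x ∉ A → T f x = 0

/-- `A` is `T`-co-invariant if `Aᶜ` is `T`-invariant. -/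
def CoInvariant (T : Lp ℝ p μ →L[ℝ] Lp ℝ p μ) (A : Set Ω) : Prop :=
  Invariant T Aᶜ

/-- `A` is `T`-admissible if it belongs to the σ-field generated by the `T`-invariant sets. -/
def Admissible (T : Lp ℝ p μ →L[ℝ] Lp ℝ p μ) (A : Set Ω) : Prop :=
  MeasurableSet[MeasurableSpace.generateFrom {B : Set Ω | Invariant T B}] A

/-- A `T`-atom is a minimal `T`-admissible set with positive measure. -/
def Atom (T : Lp ℝ p μ →L[ℝ] Lp ℝ p μ) (A : Set Ω) : Prop :=
  Admissible T A ∧ 0 < μ A ∧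
    ∀ B : Set Ω, Admissible T B → B ≤ᵐ[μ] A → μ B = 0 ∨ B =ᵐ[μ] A

/-- `FA` is (a version of) the future of `A`: the minimal `T`-invariant set containing `A` a.e. -/
def IsFuture (T : Lp ℝ p μ →L[ℝ] Lp ℝ p μ) (A FA : Set Ω) : Prop :=
  Invariant T FA ∧ A ≤ᵐ[μ] FA ∧
    ∀ B : Set Ω, Invariant T B → A ≤ᵐ[μ] B → FA ≤ᵐ[μ] B

/-- `PA` is (a version of) the past of `A`: the minimal `T`-co-invariant set containing `A` a.e. -/
def IsPast (T : Lp ℝ p μ →L[ℝ] Lp ℝ p μ) (A PA : Set Ω) : Prop :=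
  CoInvariant T PA ∧ A ≤ᵐ[μ] PA ∧
    ∀ B : Set Ω, CoInvariant T B → A ≤ᵐ[μ] B → PA ≤ᵐ[μ] B

/-- `A` is `T`-convex if `A = F(A) ∩ P(A)` a.e. -/
def Convexe (T : Lp ℝ p μ →L[ℝ] Lp ℝ p μ) (A : Set Ω) : Prop :=
  MeasurableSet A ∧
    ∃ FA PA : Set Ω, IsFuture T A FA ∧ IsPast T A PA ∧ A =ᵐ[μ] (FA ∩ PA : Set Ω)

/-- Multiplication by the indicator function of `A`, as a bounded operator on `Lp`
(defined as `0` if `A` is not measurable). -/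
def indicatorCLM (μ : MeasureTheory.Measure Ω) (p : ℝ≥0∞) [Fact (1 ≤ p)] (A : Set Ω) :
    Lp ℝ p μ →L[ℝ] Lp ℝ p μ := by
  classical
  exact if hA : MeasurableSet A then
    LinearMap.mkContinuous
      { toFun := fun f => ((Lp.memLp f).indicator hA).toLp (A.indicator f)
        map_add' := fun f g => by
          rw [← MemLp.toLp_add]
          refine MemLp.toLp_congr _ _ ?_
          filter_upwards [Lp.coeFn_add f g] with x hx
          simp only [Pi.add_apply, Set.indicator_apply, hx]
          split <;> simp
        map_smul' := fun c f => by
          rw [RingHom.id_apply, ← MemLp.toLp_const_smul]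
          refine MemLp.toLp_congr _ _ ?_
          filter_upwards [Lp.coeFn_smul c f] with x hx
          simp only [Pi.smul_apply, Set.indicator_apply, hx, smul_eq_mul]
          split <;> simp }
      1
      (fun f => by
        simp only [LinearMap.coe_mk, AddHom.coe_mk, one_mul]
        rw [Lp.norm_toLp, Lp.norm_def]
        exact ENNReal.toReal_mono (Lp.eLpNorm_ne_top f) (eLpNorm_indicator_le _))
  else 0

/-- The restriction `T_A = 1_A T 1_A` of `T` to a measurable set `A`. -/
def restrictOp (T : Lp ℝ p μ →L[ℝ] Lp ℝ p μ) (A : Set Ω) : Lp ℝ p μ →L[ℝ] Lp ℝ p μ :=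
  (indicatorCLM μ p A).comp (T.comp (indicatorCLM μ p A))

/-- The spectral radius of a bounded operator, via Gelfand's formula
`ρ(T) = inf_n ‖Tⁿ‖^(1/n) = lim_n ‖Tⁿ‖^(1/n)`. -/
def specRadius (T : Lp ℝ p μ →L[ℝ] Lp ℝ p μ) : ℝ :=
  ⨅ n : ℕ, ‖T ^ (n + 1)‖ ^ (((n : ℝ) + 1)⁻¹)

/-- The spectral radius `ρ(A)` of the restriction of `T` to `A`. -/
def rhoSet (T : Lp ℝ p μ →L[ℝ] Lp ℝ p μ) (A : Set Ω) : ℝ :=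
  specRadius (restrictOp T A)

/-- A measurable set `A` with `μ A > 0` is `T`-irreducible if the restriction of `T` to `A`
is irreducible, i.e. every `T_A`-invariant subset of `A` is a.e. trivial. -/
def Irreducible (T : Lp ℝ p μ →L[ℝ] Lp ℝ p μ) (A : Set Ω) : Prop :=
  MeasurableSet A ∧ 0 < μ A ∧
    ∀ B : Set Ω, Invariant (restrictOp T A) B → B ≤ᵐ[μ] A → μ B = 0 ∨ B =ᵐ[μ] A

/-- `T` is power compact if some power `T^k`, `k ≥ 1`, is a compact operator. -/
def PowerCompact (T : Lp ℝ p μ →L[ℝ] Lp ℝ p μ) : Prop :=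
  ∃ k : ℕ, 1 ≤ k ∧ IsCompactOperator (⇑(T ^ k))

/-- `B ≼ A` for atoms: `B ⊆ F(A)` a.e. -/
def Prec (T : Lp ℝ p μ →L[ℝ] Lp ℝ p μ) (B A : Set Ω) : Prop :=
  ∃ FA : Set Ω, IsFuture T A FA ∧ B ≤ᵐ[μ] FA

/-- `B ≺ A` for atoms: `B ⊆ F(A)` a.e. and `B ≠ A` a.e. -/
def PrecStrict (T : Lp ℝ p μ →L[ℝ] Lp ℝ p μ) (B A : Set Ω) : Prop :=
  Prec T B A ∧ ¬ (B =ᵐ[μ] A)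

/-- A critical atom: a `T`-atom whose spectral radius equals that of `T`. -/
def CriticalAtom (T : Lp ℝ p μ →L[ℝ] Lp ℝ p μ) (A : Set Ω) : Prop :=
  Atom T A ∧ rhoSet T A = specRadius T

/-- There is a chain `A = A_0 ≻ A_1 ≻ ⋯ ≻ A_n` of critical atoms starting at `A`. -/
def ChainFrom (T : Lp ℝ p μ →L[ℝ] Lp ℝ p μ) (A : Set Ω) (n : ℕ) : Prop :=
  ∃ c : ℕ → Set Ω, c 0 = A ∧ (∀ i ≤ n, CriticalAtom T (c i)) ∧
    ∀ i < n, PrecStrict T (c (i + 1)) (c i)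

/-- The generalized eigenspace `⋃ₖ ker (T - λ id)^k` of `T` at `λ`. -/
def genEigenspace (T : Lp ℝ p μ →L[ℝ] Lp ℝ p μ) (l : ℝ) : Submodule ℝ (Lp ℝ p μ) :=
  ⨆ k : ℕ, LinearMap.ker ((T - l • (1 : Lp ℝ p μ →L[ℝ] Lp ℝ p μ)) ^ k).toLinearMap

/-- The algebraic multiplicity of `λ` for `T`. -/
def algMult (T : Lp ℝ p μ →L[ℝ] Lp ℝ p μ) (l : ℝ) : ℕ :=
  Module.finrank ℝ ↥(genEigenspace T l)

/-- The set of `k` at which the kernels of `(T - ρ(T) id)^k` stabilize; the ascent of `T`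
at `ρ(T)` is its infimum. -/
def ascentSet (T : Lp ℝ p μ →L[ℝ] Lp ℝ p μ) : Set ℕ :=
  {k : ℕ | LinearMap.ker ((T - specRadius T • (1 : Lp ℝ p μ →L[ℝ] Lp ℝ p μ)) ^ k).toLinearMap
      = LinearMap.ker ((T - specRadius T • (1 : Lp ℝ p μ →L[ℝ] Lp ℝ p μ)) ^ (k + 1)).toLinearMap}

/-- `D` is (a version of) the set `T(C)`, i.e. the support of `T(1_C f)` for any a.e.
positive `f ∈ Lp`. -/
def IsImage (T : Lp ℝ p μ →L[ℝ] Lp ℝ p μ) (C D : Set Ω) : Prop :=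
  MeasurableSet C ∧ MeasurableSet D ∧
    ∀ f : Lp ℝ p μ, (∀ᵐ x ∂μ, 0 < f x) →
      D =ᵐ[μ] ({x | T (indicatorCLM μ p C f) x ≠ 0} : Set Ω)

/-- `D` is (a version of) the `k`-fold iterated image `T^k(C)`. -/
def IsIterImage (T : Lp ℝ p μ →L[ℝ] Lp ℝ p μ) : ℕ → Set Ω → Set Ω → Prop
  | 0, C, D => D = C
  | (k + 1), C, D => ∃ E : Set Ω, IsIterImage T k C E ∧ IsImage T E D

variable {Ω : Type*} [MeasurableSpace Ω] {μ : MeasureTheory.Measure Ω} {p : ℝ≥0∞}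

section Aux

variable {Ω : Type*} [MeasurableSpace Ω] {μ : MeasureTheory.Measure Ω} {p : ℝ≥0∞} [Fact (1 ≤ p)]

lemma indicatorCLM_eq_zero_iff {A : Set Ω} (hA : MeasurableSet A) (g : Lp ℝ p μ) :
    indicatorCLM μ p A g = 0 ↔ ∀ᵐ x ∂μ, x ∈ A → g x = 0 := by
  rw [indicatorCLM]
  rw [dif_pos hA]
  simp only [LinearMap.mkContinuous_apply, LinearMap.coe_mk, AddHom.coe_mk]
  rw [Lp.eq_zero_iff_ae_eq_zero]
  have e1 := (Lp.memLp g).indicator hA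
  constructor
  · intro h
    filter_upwards [h, MemLp.coeFn_toLp e1] with x hx hx2 hxA
    rw [hx2] at hx
    simpa [Set.indicator_of_mem hxA] using hx
  · intro h
    filter_upwards [h, MemLp.coeFn_toLp e1] with x hx hx2
    rw [hx2]
    by_cases hxA : x ∈ A
    · simpa [Set.indicator_of_mem hxA] using hx hxA
    · simp [Set.indicator_of_notMem hxA]

lemma vanish_iff {A : Set Ω} (hA : MeasurableSet A) (g : Lp ℝ p μ) :
    indicatorCLM μ p Aᶜ g = 0 ↔ ∀ᵐ x ∂μ, x ∉ A → g x = 0 := by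
  rw [indicatorCLM_eq_zero_iff hA.compl]
  rfl

lemma isClosed_vanish {A : Set Ω} (hA : MeasurableSet A) :
    IsClosed {g : Lp ℝ p μ | ∀ᵐ x ∂μ, x ∉ A → g x = 0} := by
  have h : {g : Lp ℝ p μ | ∀ᵐ x ∂μ, x ∉ A → g x = 0} = (indicatorCLM μ p Aᶜ) ⁻¹' {0} := by
    ext g
    simp only [Set.mem_setOf_eq, Set.mem_preimage, Set.mem_singleton_iff, vanish_iff hA]
  rw [h]
  exact isClosed_singleton.preimage (indicatorCLM μ p Aᶜ).continuous

lemma smul_nonneg_Lp {c : ℝ} (hc : 0 ≤ c) {g : Lp ℝ p μ} (hg : 0 ≤ g) : 0 ≤ c • g := by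
  rw [← Lp.coeFn_nonneg] at hg ⊢
  filter_upwards [Lp.coeFn_smul c g, hg] with x hx hgx
  rw [hx]
  exact mul_nonneg hc hgx

end Aux

theorem statement9 [SigmaFinite μ] (hμ : μ Set.univ ≠ 0) [Fact (1 ≤ p)]
    (hp : 1 < p) (hp' : p ≠ ∞)
    (T : Lp ℝ p μ →L[ℝ] Lp ℝ p μ) (hT : IsPositiveOp T)
    (l : ℝ) (hl : specRadius T < l) :
    ∃ S : Lp ℝ p μ →L[ℝ] Lp ℝ p μ,
      (l • (1 : Lp ℝ p μ →L[ℝ] Lp ℝ p μ) - T) * S = 1 ∧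
      S * (l • (1 : Lp ℝ p μ →L[ℝ] Lp ℝ p μ) - T) = 1 ∧
      IsPositiveOp S ∧
      ∀ A : Set Ω, Invariant S A ↔ Invariant T A := by
  classical
  have hl0 : 0 < l := by
    refine lt_of_le_of_lt ?_ hl
    unfold specRadius
    exact Real.iInf_nonneg fun n => Real.rpow_nonneg (norm_nonneg _) _
  unfold specRadius at hl
  obtain ⟨k, hk⟩ := exists_lt_of_ciInf_lt hl
  set N := k + 1 with hNdef
  have hN0 : N ≠ 0 := Nat.succ_ne_zero k
  have hNcast : ((N : ℕ) : ℝ) = (k : ℝ) + 1 := by rw [hNdef]; push_cast; ring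
  have hk' : ‖T ^ N‖ ^ (((N : ℕ) : ℝ))⁻¹ < l := by rw [hNcast]; exact hk
  have hTN : ‖T ^ N‖ < l ^ N := by
    have h1 : (‖T ^ N‖ ^ (((N : ℕ) : ℝ))⁻¹) ^ N < l ^ N :=
      pow_lt_pow_left₀ hk' (Real.rpow_nonneg (norm_nonneg _) _) hN0
    rwa [Real.rpow_inv_natCast_pow (norm_nonneg _) hN0] at h1
  set u := l⁻¹ • T with hu
  have huN : ‖u ^ N‖ < 1 := by
    rw [hu, smul_pow, norm_smul (l⁻¹ ^ N) (T ^ N), Real.norm_eq_abs,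
      abs_of_pos (pow_pos (inv_pos.mpr hl0) N), inv_pow, inv_mul_eq_div,
      div_lt_one (pow_pos hl0 N)]
    exact hTN
  set a := ‖u ^ N‖ with ha
  have ha0 : 0 ≤ a := norm_nonneg _
  set b := (a + 1) / 2 with hbdef
  have hab : a < b := by rw [hbdef]; linarith
  have hb0 : 0 < b := by rw [hbdef]; linarith
  have hb1 : b < 1 := by rw [hbdef]; linarith
  set r := b ^ (((N : ℕ) : ℝ))⁻¹ with hrdef
  have hr0 : 0 < r := Real.rpow_pos_of_pos hb0 _
  have hr1 : r < 1 :=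
    Real.rpow_lt_one hb0.le hb1 (inv_pos.mpr (by exact_mod_cast Nat.pos_of_ne_zero hN0))
  have hrN : r ^ N = b := Real.rpow_inv_natCast_pow hb0.le hN0
  set w := r⁻¹ • u with hw
  have hwN : ‖w ^ N‖ < 1 := by
    rw [hw, smul_pow, norm_smul (r⁻¹ ^ N) (u ^ N), Real.norm_eq_abs,
      abs_of_pos (pow_pos (inv_pos.mpr hr0) N), inv_pow, hrN, inv_mul_eq_div,
      div_lt_one hb0]
    exact hab
  set M := ∑ i ∈ Finset.range N, ‖w ^ i‖ with hMdef
  have hM : ∀ i ∈ Finset.range N, ‖w ^ i‖ ≤ M := fun i hi =>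
    Finset.single_le_sum (fun j _ => norm_nonneg _) hi
  have hM0 : 0 ≤ M := Finset.sum_nonneg fun j _ => norm_nonneg _
  have hbound : ∀ n, ‖w ^ n‖ ≤ M := by
    intro n
    rcases lt_or_ge n N with h | h
    · exact hM n (Finset.mem_range.mpr h)
    · have hq : 0 < n / N := Nat.div_pos h (Nat.pos_of_ne_zero hN0)
      calc ‖w ^ n‖ = ‖(w ^ N) ^ (n / N) * w ^ (n % N)‖ := by
            rw [← pow_mul, ← pow_add, Nat.div_add_mod]
        _ ≤ ‖(w ^ N) ^ (n / N)‖ * ‖w ^ (n % N)‖ := norm_mul_le _ _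
        _ ≤ ‖w ^ N‖ ^ (n / N) * M :=
            mul_le_mul (norm_pow_le' _ hq)
              (hM _ (Finset.mem_range.mpr (Nat.mod_lt _ (Nat.pos_of_ne_zero hN0))))
              (norm_nonneg _) (pow_nonneg (norm_nonneg _) _)
        _ ≤ 1 * M := by
            apply mul_le_mul_of_nonneg_right _ hM0
            exact pow_le_one₀ (norm_nonneg _) hwN.le
        _ = M := one_mul M
  have hurw : u = r • w := by
    rw [hw, smul_smul, mul_inv_cancel₀ hr0.ne', one_smul]
  have hunorm : ∀ n, ‖u ^ n‖ ≤ M * r ^ n := by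
    intro n
    rw [hurw, smul_pow, norm_smul (r ^ n) (w ^ n), Real.norm_eq_abs, abs_of_pos (pow_pos hr0 _),
      mul_comm (r ^ n)]
    exact mul_le_mul_of_nonneg_right (hbound n) (pow_nonneg hr0.le n)
  have hsum : Summable (fun n => u ^ n) := by
    apply Summable.of_norm
    apply Summable.of_nonneg_of_le (fun n => norm_nonneg _) hunorm
    exact (summable_geometric_of_lt_one hr0.le hr1).mul_left M
  set W := ∑' n, u ^ n with hWdef
  have hW : HasSum (fun n => u ^ n) W := hsum.hasSum
  have hupow0 : Tendsto (fun m => u ^ m) atTop (𝓝 (0 : Lp ℝ p μ →L[ℝ] Lp ℝ p μ)) := by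
    apply squeeze_zero_norm hunorm
    simpa using (tendsto_pow_atTop_nhds_zero_of_lt_one hr0.le hr1).const_mul M
  have h2tel : Tendsto (fun m => ∑ n ∈ Finset.range m, (u ^ n - u ^ (n + 1))) atTop
      (𝓝 (1 : Lp ℝ p μ →L[ℝ] Lp ℝ p μ)) := by
    simp only [Finset.sum_range_sub' (fun n => u ^ n)]
    simpa using tendsto_const_nhds.sub hupow0
  have hleft : (1 - u) * W = 1 := by
    have h1 : HasSum (fun n => u ^ n - u ^ (n + 1)) ((1 - u) * W) := by
      have h0 := hW.mul_left (1 - u)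
      simpa [sub_mul, one_mul, pow_succ'] using h0
    exact tendsto_nhds_unique h1.tendsto_sum_nat h2tel
  have hright : W * (1 - u) = 1 := by
    have h1 : HasSum (fun n => u ^ n - u ^ (n + 1)) (W * (1 - u)) := by
      have h0 := hW.mul_right (1 - u)
      simpa [mul_sub, mul_one, pow_succ] using h0
    exact tendsto_nhds_unique h1.tendsto_sum_nat h2tel
  have hfac : l • (1 : Lp ℝ p μ →L[ℝ] Lp ℝ p μ) - T = l • (1 - u) := by
    rw [hu, smul_sub, smul_smul, mul_inv_cancel₀ hl0.ne', one_smul]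
  set S := l⁻¹ • W with hSdef
  -- positivity of powers of u
  have hu_pos : IsPositiveOp u := by
    intro f hf
    have h : u f = l⁻¹ • (T f) := rfl
    rw [h]
    exact smul_nonneg_Lp (inv_nonneg.mpr hl0.le) (hT f hf)
  have hpow_pos : ∀ n, IsPositiveOp (u ^ n) := by
    intro n
    induction n with
    | zero => intro f hf; simpa using hf
    | succ n ih =>
        intro f hf
        have h : (u ^ (n + 1)) f = (u ^ n) (u f) := by rw [pow_succ]; rfl
        rw [h]
        exact ih _ (hu_pos f hf)
  have hW_apply : ∀ f : Lp ℝ p μ, HasSum (fun n => (u ^ n) f) (W f) := fun f =>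
    hW.mapL (ContinuousLinearMap.apply ℝ (Lp ℝ p μ) f)
  have hS_pos : IsPositiveOp S := by
    intro f hf
    have hWf : 0 ≤ W f :=
      ge_of_tendsto' (hW_apply f).tendsto_sum_nat fun m =>
        Finset.sum_nonneg fun n _ => hpow_pos n f hf
    have h : S f = l⁻¹ • (W f) := rfl
    rw [h]
    exact smul_nonneg_Lp (inv_nonneg.mpr hl0.le) hWf
  refine ⟨S, ?_, ?_, hS_pos, ?_⟩
  · rw [hfac, hSdef, smul_mul_assoc, mul_smul_comm, smul_smul, mul_inv_cancel₀ hl0.ne',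
      one_smul, hleft]
  · rw [hfac, hSdef, smul_mul_assoc, mul_smul_comm, smul_smul, inv_mul_cancel₀ hl0.ne',
      one_smul, hright]
  · intro A
    constructor
    · -- Invariant S A → Invariant T A
      rintro ⟨hA, hSinv⟩
      refine ⟨hA, fun f hf hf0 => ?_⟩
      have hSf0 := hSinv f hf hf0
      have hge : f + u f ≤ W f := by
        refine ge_of_tendsto (hW_apply f).tendsto_sum_nat ?_
        filter_upwards [eventually_ge_atTop 2] with m hm
        have hsub : ∑ n ∈ Finset.range 2, (u ^ n) f ≤ ∑ n ∈ Finset.range m, (u ^ n) f :=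
          Finset.sum_le_sum_of_subset_of_nonneg (Finset.range_subset_range.mpr hm)
            fun n _ _ => hpow_pos n f hf
        refine le_trans (le_of_eq ?_) hsub
        rw [Finset.sum_range_succ, Finset.sum_range_one, pow_zero, pow_one]
        simp
      have hTf0 : 0 ≤ T f := hT f hf
      rw [← Lp.coeFn_le] at hge
      rw [← Lp.coeFn_nonneg] at hTf0
      have huf : u f = l⁻¹ • (T f) := rfl
      have hWS : W f = l • (S f) := by
        have h : S f = l⁻¹ • (W f) := rfl
        rw [h, smul_smul, mul_inv_cancel₀ hl0.ne', one_smul]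
      filter_upwards [hSf0, hge, hTf0, hf0, Lp.coeFn_add f (u f),
        Lp.coeFn_smul l⁻¹ (T f), Lp.coeFn_smul l (S f)] with x hSx hgex hTx hfx hadd hsm hsm2 hxA
      have e1 : (f + u f) x = f x + l⁻¹ * (T f) x := by
        rw [hadd]
        simp only [Pi.add_apply]
        rw [huf, hsm]
        simp
      have e2 : (W f) x = l * (S f) x := by
        rw [hWS, hsm2]
        simp
      rw [e1, e2, hSx hxA, hfx hxA] at hgex
      have h1 : l⁻¹ * (T f) x ≤ 0 := by linarith
      have h2 : (0 : ℝ) ≤ (T f) x := hTx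
      have hlinv : 0 < l⁻¹ := inv_pos.mpr hl0
      have h3 : l⁻¹ * (T f) x = 0 := le_antisymm h1 (mul_nonneg hlinv.le h2)
      exact (mul_eq_zero.mp h3).resolve_left hlinv.ne'
    · -- Invariant T A → Invariant S A
      rintro ⟨hA, hTinv⟩
      refine ⟨hA, fun f hf hf0 => ?_⟩
      have hstep : ∀ n, 0 ≤ (u ^ n) f ∧ indicatorCLM μ p Aᶜ ((u ^ n) f) = 0 := by
        intro n
        induction n with
        | zero =>
            constructor
            · simpa using hf
            · rw [vanish_iff hA]
              have h : (u ^ 0) f = f := by simp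
              rw [h]
              exact hf0
        | succ n ih =>
            have h1 : (u ^ (n + 1)) f = u ((u ^ n) f) := by rw [pow_succ']; rfl
            have hTv := hTinv ((u ^ n) f) ih.1 ((vanish_iff hA _).mp ih.2)
            refine ⟨by rw [h1]; exact hu_pos _ ih.1, ?_⟩
            rw [vanish_iff hA, h1]
            have h2 : u ((u ^ n) f) = l⁻¹ • (T ((u ^ n) f)) := rfl
            rw [h2]
            filter_upwards [hTv, Lp.coeFn_smul l⁻¹ (T ((u ^ n) f))] with x hx h'x hxA
            rw [h'x, Pi.smul_apply, hx hxA, smul_zero]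
      have hmem : W f ∈ {g : Lp ℝ p μ | ∀ᵐ x ∂μ, x ∉ A → g x = 0} := by
        refine (isClosed_vanish hA).mem_of_tendsto (hW_apply f).tendsto_sum_nat ?_
        filter_upwards with m
        show ∀ᵐ x ∂μ, x ∉ A → (∑ n ∈ Finset.range m, (u ^ n) f) x = 0
        rw [← vanish_iff hA, map_sum]
        exact Finset.sum_eq_zero fun n _ => (hstep n).2
      have hSf : S f = l⁻¹ • (W f) := rfl
      filter_upwards [hmem, Lp.coeFn_smul l⁻¹ (W f)] with x hx h'x hxA
      rw [hSf, h'x]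
      simp [hx hxA]


end PaperAtoms
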